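/- Let N/F be a Galois p-extension and K/F an arbitrary extension inside a common field. If Soc^p(N/F) ∩ K = F then N ∩ K = F. -/

import Mathlib

lemma aux_pgroup_coatom {G : Type*} [Group G] [Finite G] {p : ℕ} (hp : p.Prime)
    (hG : IsPGroup p G) (H : Subgroup G) (hH : H ≠ ⊤) :
    ∃ P : Subgroup G, H ≤ P ∧ P.Normal ∧ P.index = p := by
  haveI : Fact p.Prime := ⟨hp⟩
  haveI : Group.IsNilpotent G := hG.isNilpotent
  obtain ⟨P, hPco, hHP⟩ := (IsCoatomic.eq_top_or_exists_le_coatom H).resolve_left hH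
  have hPn : P.Normal := Subgroup.NormalizerCondition.normal_of_coatom P normalizerCondition_of_isNilpotent hPco
  refine ⟨P, hHP, hPn, ?_⟩
  -- quotient is a nontrivial p-group
  have hQ : IsPGroup p (G ⧸ P) := hG.to_quotient P
  have hne : P.index ≠ 1 := fun h => hPco.1 (Subgroup.index_eq_one.mp h)
  have hcard : Nat.card (G ⧸ P) = P.index := rfl
  obtain ⟨k, hk⟩ := IsPGroup.iff_card.mp hQ
  have hk1 : k ≠ 0 := by
    rintro rfl
    rw [pow_zero, hcard] at hk
    exact hne hk
  have hpdvd : p ∣ Nat.card (G ⧸ P) := hk ▸ dvd_pow_self p hk1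
  obtain ⟨g, hg⟩ := exists_prime_orderOf_dvd_card' (G := G ⧸ P) p hpdvd
  set Q' : Subgroup (G ⧸ P) := Subgroup.zpowers g with hQ'
  have hQ'card : Nat.card Q' = p := by rw [hQ', Nat.card_zpowers, hg]
  have hQ'ne : Q' ≠ ⊥ := by
    intro h
    rw [h, Subgroup.card_bot] at hQ'card
    exact hp.one_lt.ne hQ'card
  have hR := hPco.2 (Q'.comap (QuotientGroup.mk' P))
  have hle : P ≤ Q'.comap (QuotientGroup.mk' P) := by
    intro a ha
    simp [Subgroup.mem_comap, QuotientGroup.mk'_apply]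
    have : (QuotientGroup.mk' P) a = 1 := by
      rw [← QuotientGroup.ker_mk' P] at ha
      exact ha
    rw [QuotientGroup.mk'_apply] at this
    rw [this]
    exact Q'.one_mem
  rcases lt_or_eq_of_le hle with hlt | heq
  · have htop := hR hlt
    have : Q' = ⊤ := by
      rw [← Subgroup.map_comap_eq_self_of_surjective (QuotientGroup.mk'_surjective P) Q', htop,
        Subgroup.map_top_of_surjective _ (QuotientGroup.mk'_surjective P)]
    rw [← hcard, ← hQ'card, this, Subgroup.card_top]
  · exfalso
    apply hQ'ne
    rw [← Subgroup.map_comap_eq_self_of_surjective (QuotientGroup.mk'_surjective P) Q', ← heq]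
    rw [Subgroup.map_eq_bot_iff, QuotientGroup.ker_mk']

set_option maxHeartbeats 1000000 in
open IntermediateField Module in
/-- Let `N/F` be a Galois `p`-extension and `K/F` an arbitrary extension inside a common
field.  If `Soc^p(N/F) ∩ K = F`, then `N ∩ K = F`. -/
theorem stmt_9 (p : ℕ) (hp : p.Prime) {F Ω : Type*} [Field F] [Field Ω] [Algebra F Ω]
    (N K : IntermediateField F Ω) (hGal : IsGalois F N)
    (hpro : ∀ D : IntermediateField F Ω, D ≤ N → FiniteDimensional F D → IsGalois F D →
      ∃ n : ℕ, Module.finrank F D = p ^ n)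
    (hsoc : (⨆ D ∈ {D : IntermediateField F Ω |
        D ≤ N ∧ IsGalois F D ∧ Module.finrank F D = p}, D) ⊓ K = ⊥) :
    N ⊓ K = ⊥ := by
  haveI := hGal
  rw [eq_bot_iff]
  intro x hx
  obtain ⟨hxN, hxK⟩ := IntermediateField.mem_inf.mp hx
  by_contra hxbot
  -- work inside N
  set x' : ↥N := ⟨x, hxN⟩ with hx'
  have hint : IsIntegral F x' := Algebra.IsIntegral.isIntegral x'
  haveI : FiniteDimensional F (↥F⟮x'⟯) := adjoin.finiteDimensional hint
  set M : IntermediateField F ↥N := normalClosure F (↥F⟮x'⟯) ↥N with hM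
  haveI : FiniteDimensional F (↥M) := normalClosure.is_finiteDimensional F (↥F⟮x'⟯) ↥N
  haveI hMgal : IsGalois F (↥M) :=
    { to_isSeparable := Algebra.isSeparable_tower_bot_of_isSeparable F (↥M) ↥N
      to_normal := normalClosure.normal F (↥F⟮x'⟯) ↥N }
  have hEM : F⟮x'⟯ ≤ M := le_normalClosure F⟮x'⟯
  -- the Galois group of M/F is a p-group
  haveI : FiniteDimensional F (↥(lift M)) :=
    Module.Finite.equiv (liftAlgEquiv M).toLinearEquiv
  haveI : IsGalois F (↥(lift M)) := IsGalois.of_algEquiv (liftAlgEquiv M)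
  obtain ⟨n, hn⟩ := hpro (lift M) (lift_le M) inferInstance inferInstance
  have hcardM : Nat.card (↥M ≃ₐ[F] ↥M) = p ^ n := by
    rw [IsGalois.card_aut_eq_finrank,
      (liftAlgEquiv M).toLinearEquiv.finrank_eq, hn]
  have hpG : IsPGroup p (↥M ≃ₐ[F] ↥M) := by
    haveI : Fact p.Prime := ⟨hp⟩
    exact IsPGroup.iff_card.mpr ⟨n, hcardM⟩
  -- x as an element of M
  set m : ↥M := ⟨x', hEM (mem_adjoin_simple_self F x')⟩ with hm
  set E : IntermediateField F (↥M) := F⟮m⟯ with hE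
  have hEbot : E ≠ ⊥ := by
    intro h
    apply hxbot
    have hmbot : m ∈ (⊥ : IntermediateField F ↥M) := h ▸ mem_adjoin_simple_self F m
    obtain ⟨c, hc⟩ := IntermediateField.mem_bot.mp hmbot
    refine IntermediateField.mem_bot.mpr ⟨c, ?_⟩
    rw [IsScalarTower.algebraMap_apply F (↥N) Ω, IsScalarTower.algebraMap_apply F (↥M) ↥N, hc]
    rfl
  have hHne : E.fixingSubgroup ≠ ⊤ := by
    intro h
    apply hEbot
    have h1 : fixedField (⊤ : Subgroup (↥M ≃ₐ[F] ↥M)) = ⊥ := by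
      have h2 : (⊥ : IntermediateField F ↥M).fixingSubgroup = ⊤ := by
        rw [eq_top_iff]
        intro g _
        rw [IntermediateField.mem_fixingSubgroup_iff]
        intro y hy
        obtain ⟨c, hc⟩ := IntermediateField.mem_bot.mp hy
        rw [← hc, AlgEquiv.commutes]
      rw [← h2, IsGalois.fixedField_fixingSubgroup]
    rw [← IsGalois.fixedField_fixingSubgroup E, h, h1]
  -- find a normal subgroup of index p above the fixing subgroup
  obtain ⟨P, hHP, hPn, hPidx⟩ := aux_pgroup_coatom hp hpG E.fixingSubgroup hHne
  haveI := hPn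
  set D : IntermediateField F (↥M) := fixedField P with hD
  have hDE : D ≤ E := by
    conv_rhs => rw [← IsGalois.fixedField_fixingSubgroup E]
    intro y hy
    exact fun g => hy ⟨g.1, hHP g.2⟩
  haveI : IsGalois F (↥D) := IsGalois.of_fixedField_normal_subgroup P
  haveI : FiniteDimensional F (↥D) := inferInstance
  have hDrank : finrank F (↥D) = p := by
    have h1 : Fintype.card (↥D ≃ₐ[F] ↥D) = finrank F (↥D) := by
      rw [← Nat.card_eq_fintype_card]; exact IsGalois.card_aut_eq_finrank F ↥D
    have h2 : Nat.card (↥D ≃ₐ[F] ↥D) = P.index :=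
      (Nat.card_congr (IsGalois.normalAutEquivQuotient P).toEquiv).symm
    rw [← h1, ← Nat.card_eq_fintype_card, h2, hPidx]
  -- push D down to Ω
  set D₂ : IntermediateField F Ω := lift (lift D) with hD₂
  have e2 : ↥D ≃ₐ[F] ↥D₂ := (liftAlgEquiv D).trans (liftAlgEquiv (lift D))
  have hD₂N : D₂ ≤ N := lift_le (lift D)
  haveI : IsGalois F (↥D₂) := IsGalois.of_algEquiv e2
  have hD₂rank : finrank F (↥D₂) = p := by rw [← e2.toLinearEquiv.finrank_eq, hDrank]
  haveI : FiniteDimensional F (↥D₂) := Module.Finite.equiv e2.toLinearEquiv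
  have hD₂K : D₂ ≤ K := by
    have l1 : lift D ≤ lift E := map_mono _ hDE
    have l2 : lift E = F⟮x'⟯ := lift_adjoin_simple (F := F) M m
    have l3 : D₂ ≤ lift (F⟮x'⟯ : IntermediateField F ↥N) := by
      rw [hD₂, ← l2]
      exact map_mono _ l1
    have l4 : lift (F⟮x'⟯ : IntermediateField F ↥N) = F⟮x⟯ := lift_adjoin_simple (F := F) N x'
    refine le_trans l3 ?_
    rw [l4]
    exact adjoin_simple_le_iff.mpr hxK
  have hD₂soc : D₂ ≤ (⨆ D ∈ {D : IntermediateField F Ω |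
      D ≤ N ∧ IsGalois F D ∧ Module.finrank F D = p}, D) :=
    le_iSup₂ (f := fun D _ => D) D₂ ⟨hD₂N, inferInstance, hD₂rank⟩
  have hbot : D₂ ≤ ⊥ := hsoc ▸ le_inf hD₂soc hD₂K
  have hD₂bot : D₂ = ⊥ := le_bot_iff.mp hbot
  rw [hD₂bot, IntermediateField.finrank_bot] at hD₂rank
  exact hp.one_lt.ne hD₂rank
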